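/- Let G₂ be the group presented by generators a, b, c and relators a², b², c², (ab)³, (bc)³, (ac)³. Then the homomorphism σ₂ from G₂ to the group of affine equivalences of ℝ² determined by σ₂(a)(x,y) = (x, x − y), σ₂(b)(x,y) = (3 − y, 3 − x), σ₂(c)(x,y) = (−x + y, y) is well defined (the images satisfy the relators) and injective. -/

import Mathlib

noncomputable section Stmt3Aux
set_option linter.all false

def fA : (ℝ × ℝ) →ₗ[ℝ] (ℝ × ℝ) where
  toFun p := (p.1, p.1 - p.2)
  map_add' p q := by ext <;> simp <;> ring
  map_smul' r p := by ext <;> simp <;> ring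

def fB : (ℝ × ℝ) →ₗ[ℝ] (ℝ × ℝ) where
  toFun p := (-p.2, -p.1)
  map_add' p q := by ext <;> simp <;> ring
  map_smul' r p := by ext <;> simp <;> ring

def fC : (ℝ × ℝ) →ₗ[ℝ] (ℝ × ℝ) where
  toFun p := (-p.1 + p.2, p.2)
  map_add' p q := by ext <;> simp <;> ring
  map_smul' r p := by ext <;> simp <;> ring

def LA : (ℝ × ℝ) ≃ₗ[ℝ] (ℝ × ℝ) :=
  LinearEquiv.ofLinear fA fA (by ext p <;> simp [fA]) (by ext p <;> simp [fA])

def LB : (ℝ × ℝ) ≃ₗ[ℝ] (ℝ × ℝ) :=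
  LinearEquiv.ofLinear fB fB (by ext p <;> simp [fB]) (by ext p <;> simp [fB])

def LC : (ℝ × ℝ) ≃ₗ[ℝ] (ℝ × ℝ) :=
  LinearEquiv.ofLinear fC fC (by ext p <;> simp [fC]) (by ext p <;> simp [fC])

def EA : (ℝ × ℝ) ≃ᵃ[ℝ] (ℝ × ℝ) := LA.toAffineEquiv
def EB : (ℝ × ℝ) ≃ᵃ[ℝ] (ℝ × ℝ) :=
  LB.toAffineEquiv.trans (AffineEquiv.constVAdd ℝ (ℝ × ℝ) (3, 3))
def EC : (ℝ × ℝ) ≃ᵃ[ℝ] (ℝ × ℝ) := LC.toAffineEquiv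

@[simp] lemma EA_apply (p : ℝ × ℝ) : EA p = (p.1, p.1 - p.2) := rfl
@[simp] lemma EB_apply (p : ℝ × ℝ) : EB p = (3 - p.2, 3 - p.1) := by
  show ((3:ℝ), (3:ℝ)) +ᵥ LB p = _
  simp [LB, fB, Prod.ext_iff]
  constructor <;> ring
@[simp] lemma EC_apply (p : ℝ × ℝ) : EC p = (-p.1 + p.2, p.2) := rfl

@[simp] lemma ae_mul_apply (f g : (ℝ × ℝ) ≃ᵃ[ℝ] (ℝ × ℝ)) (p : ℝ × ℝ) :
    (f * g) p = f (g p) := rfl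
@[simp] lemma ae_one_apply (p : ℝ × ℝ) : (1 : (ℝ × ℝ) ≃ᵃ[ℝ] (ℝ × ℝ)) p = p := rfl

abbrev myRels : Set (FreeGroup (Fin 3)) :=
  {FreeGroup.of 0 ^ 2, FreeGroup.of 1 ^ 2, FreeGroup.of 2 ^ 2,
   (FreeGroup.of 0 * FreeGroup.of 1) ^ 3,
   (FreeGroup.of 1 * FreeGroup.of 2) ^ 3,
   (FreeGroup.of 0 * FreeGroup.of 2) ^ 3}

abbrev G2 := PresentedGroup myRels

def fgen : Fin 3 → ((ℝ × ℝ) ≃ᵃ[ℝ] (ℝ × ℝ)) := ![EA, EB, EC]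

lemma fgen_rels : ∀ r ∈ myRels, FreeGroup.lift fgen r = 1 := by
  intro r hr
  rcases hr with h | h | h | h | h | h <;> subst h <;>
    (apply AffineEquiv.ext; intro p;
     simp [pow_succ, fgen, Prod.ext_iff] <;> constructor <;> ring)

def sigma : G2 →* ((ℝ × ℝ) ≃ᵃ[ℝ] (ℝ × ℝ)) := PresentedGroup.toGroup fgen_rels

-- generators
def ga : G2 := PresentedGroup.of 0
def gb : G2 := PresentedGroup.of 1
def gc : G2 := PresentedGroup.of 2

lemma rel_one : ∀ r ∈ myRels, PresentedGroup.mk myRels r = 1 := by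
  intro r hr
  show (QuotientGroup.mk r : G2) = 1
  rw [QuotientGroup.eq_one_iff]
  exact Subgroup.subset_normalClosure hr

lemma haa : ga * ga = 1 := by
  have := rel_one _ (Set.mem_insert _ _)
  rw [← sq]; exact this

lemma hbb : gb * gb = 1 := by
  have := rel_one (FreeGroup.of 1 ^ 2) (by right; left; rfl)
  rw [← sq]; exact this

lemma hcc : gc * gc = 1 := by
  have := rel_one (FreeGroup.of 2 ^ 2) (by right; right; left; rfl)
  rw [← sq]; exact this

lemma hab3 : (ga * gb) ^ 3 = 1 := by
  have := rel_one ((FreeGroup.of 0 * FreeGroup.of 1) ^ 3) (by right; right; right; left; rfl)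
  rw [← this]; rfl

lemma hbc3 : (gb * gc) ^ 3 = 1 := by
  have := rel_one ((FreeGroup.of 1 * FreeGroup.of 2) ^ 3)
    (by right; right; right; right; left; rfl)
  rw [← this]; rfl

lemma hac3 : (ga * gc) ^ 3 = 1 := by
  have := rel_one ((FreeGroup.of 0 * FreeGroup.of 2) ^ 3)
    (by right; right; right; right; right; rfl)
  rw [← this]; rfl


-- abstract helper lemmas
section Helpers
variable {G : Type*} [Group G] {x y : G}

lemma sq1 (h : x * x = 1) (z : G) : x * (x * z) = z := by
  rw [← mul_assoc, h, one_mul]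

lemma braid_of_cube (h3 : (x * y) ^ 3 = 1) (hx : x * x = 1) (hy : y * y = 1) :
    x * y * x = y * x * y := by
  have hsq : (x * y) ^ 2 = y * x := by
    have h : (x * y) ^ 2 * (x * y) = 1 := by rw [← pow_succ]; exact h3
    rw [eq_inv_of_mul_eq_one_left h, mul_inv_rev,
      inv_eq_of_mul_eq_one_right hx, inv_eq_of_mul_eq_one_right hy]
  have h2 : (x * y) ^ 2 * y = x * y * x := by
    rw [sq, mul_assoc (x*y), mul_assoc x y y, hy, mul_one]
  rw [← h2, hsq]

lemma braid1 (hbr : x * y * x = y * x * y) (z : G) :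
    x * (y * (x * z)) = y * (x * (y * z)) := by
  calc x * (y * (x * z)) = (x * y * x) * z := by simp only [mul_assoc]
  _ = (y * x * y) * z := by rw [hbr]
  _ = y * (x * (y * z)) := by simp only [mul_assoc]

end Helpers

lemma inva : ga⁻¹ = ga := inv_eq_of_mul_eq_one_right haa
lemma invb : gb⁻¹ = gb := inv_eq_of_mul_eq_one_right hbb
lemma invc : gc⁻¹ = gc := inv_eq_of_mul_eq_one_right hcc

lemma Bab : ga * gb * ga = gb * ga * gb := braid_of_cube hab3 haa hbb
lemma Bbc : gb * gc * gb = gc * gb * gc := braid_of_cube hbc3 hbb hcc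
lemma Bac : ga * gc * ga = gc * ga * gc := braid_of_cube hac3 haa hcc

lemma Aab (z : G2) : ga * (gb * (ga * z)) = gb * (ga * (gb * z)) := braid1 Bab z
lemma Abc (z : G2) : gb * (gc * (gb * z)) = gc * (gb * (gc * z)) := braid1 Bbc z
lemma Aac (z : G2) : ga * (gc * (ga * z)) = gc * (ga * (gc * z)) := braid1 Bac z

def tt : G2 := ga * (gb * (ga * gc))
def uu : G2 := gc * (gb * (ga * (gc * (ga * gc))))

lemma invt : tt⁻¹ = gc * (ga * (gb * ga)) := by
  rw [tt]; simp only [mul_inv_rev, inva, invb, invc, mul_assoc]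

lemma invu : uu⁻¹ = gc * (ga * (gc * (ga * (gb * gc)))) := by
  rw [uu]; simp only [mul_inv_rev, inva, invb, invc, mul_assoc]

-- the commutation of the two translations
lemma htu : tt * uu = uu * tt := by
  have h1 : tt * uu = gb * (gc * (ga * gc)) := by
    rw [tt, uu]
    simp only [mul_assoc, sq1 haa, sq1 hbb, sq1 hcc, haa, hbb, hcc, one_mul, mul_one]
    rw [Aab (gb * (ga * (gc * (ga * gc))))]
    simp only [mul_assoc, sq1 haa, sq1 hbb, sq1 hcc, haa, hbb, hcc, one_mul, mul_one]
  have h2 : uu * tt = gb * (gc * (ga * gc)) := by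
    rw [tt, uu]
    simp only [mul_assoc, sq1 haa, sq1 hbb, sq1 hcc, haa, hbb, hcc, one_mul, mul_one]
    rw [Aac (gc * (ga * (gb * (ga * gc))))]
    simp only [mul_assoc, sq1 haa, sq1 hbb, sq1 hcc, haa, hbb, hcc, one_mul, mul_one]
    rw [Abc (ga * gc)]
    simp only [mul_assoc, sq1 haa, sq1 hbb, sq1 hcc, haa, hbb, hcc, one_mul, mul_one]
  rw [h1, h2]


def rep : Fin 6 → G2
  | 0 => 1
  | 1 => ga
  | 2 => gc
  | 3 => ga * gc
  | 4 => gc * ga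
  | 5 => ga * (gc * ga)

def gen : Fin 3 → G2
  | 0 => ga
  | 1 => gb
  | 2 => gc

lemma B1 : tt * (uu * (ga * (gc * ga))) = gb := by
  rw [tt, uu]
  simp only [mul_assoc, sq1 haa, sq1 hbb, sq1 hcc, haa, hbb, hcc, one_mul, mul_one]
  rw [Aac (gc * (ga * (gc * ga)))]
  simp only [mul_assoc, sq1 haa, sq1 hbb, sq1 hcc, haa, hbb, hcc, one_mul, mul_one]
  rw [Aab (gb * ga)]
  simp only [mul_assoc, sq1 haa, sq1 hbb, sq1 hcc, haa, hbb, hcc, one_mul, mul_one]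

lemma B2 : tt * (gc * ga) = ga * gb := by
  rw [tt]; simp only [mul_assoc, sq1 haa, sq1 hbb, sq1 hcc, haa, hbb, hcc, one_mul, mul_one]

lemma B3 : uu * (ga * gc) = gc * gb := by
  rw [uu]; simp only [mul_assoc, sq1 haa, sq1 hbb, sq1 hcc, haa, hbb, hcc, one_mul, mul_one]
  rw [Aac (gc * (ga * gc))]
  simp only [mul_assoc, sq1 haa, sq1 hbb, sq1 hcc, haa, hbb, hcc, one_mul, mul_one]

lemma B4 : uu⁻¹ * gc = ga * (gc * gb) := by
  rw [invu]; simp only [mul_assoc, sq1 haa, sq1 hbb, sq1 hcc, haa, hbb, hcc, one_mul, mul_one]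
  rw [← Aac (ga * gb)]
  simp only [mul_assoc, sq1 haa, sq1 hbb, sq1 hcc, haa, hbb, hcc, one_mul, mul_one]

lemma B5 : tt⁻¹ * ga = gc * (ga * gb) := by
  rw [invt]; simp only [mul_assoc, sq1 haa, sq1 hbb, sq1 hcc, haa, hbb, hcc, one_mul, mul_one]

lemma B6 : tt⁻¹ * uu⁻¹ = ga * (gc * (ga * gb)) := by
  rw [invt, invu]; simp only [mul_assoc, sq1 haa, sq1 hbb, sq1 hcc, haa, hbb, hcc, one_mul, mul_one]
  rw [Aac (gc * (ga * (gb * gc)))]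
  simp only [mul_assoc, sq1 haa, sq1 hbb, sq1 hcc, haa, hbb, hcc, one_mul, mul_one]
  rw [Abc gc]
  simp only [mul_assoc, sq1 haa, sq1 hbb, sq1 hcc, haa, hbb, hcc, one_mul, mul_one]
  rw [Aac gb]

lemma key (w : Fin 6) (s : Fin 3) :
    ∃ (p q : ℤ) (w' : Fin 6), rep w * gen s = tt ^ p * uu ^ q * rep w' := by
  fin_cases w <;> fin_cases s
  · exact ⟨0, 0, 1, by simp [rep, gen]⟩
  · exact ⟨1, 1, 5, by simp [rep, gen, zpow_one, ← B1, mul_assoc]⟩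
  · exact ⟨0, 0, 2, by simp [rep, gen]⟩
  · exact ⟨0, 0, 0, by simp [rep, gen, haa]⟩
  · exact ⟨1, 0, 4, by simp [rep, gen, zpow_one, ← B2, mul_assoc]⟩
  · exact ⟨0, 0, 3, by simp [rep, gen]⟩
  · exact ⟨0, 0, 4, by simp [rep, gen]⟩
  · exact ⟨0, 1, 3, by simp [rep, gen, zpow_one, ← B3, mul_assoc]⟩
  · exact ⟨0, 0, 0, by simp [rep, gen, hcc]⟩
  · exact ⟨0, 0, 5, by simp [rep, gen, mul_assoc]⟩
  · exact ⟨0, -1, 2, by simp [rep, gen, zpow_neg, zpow_one, ← B4, mul_assoc]⟩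
  · exact ⟨0, 0, 1, by simp [rep, gen, mul_assoc, sq1 hcc, hcc]⟩
  · exact ⟨0, 0, 2, by simp [rep, gen, mul_assoc, sq1 haa, haa]⟩
  · exact ⟨-1, 0, 1, by simp [rep, gen, zpow_neg, zpow_one, ← B5, mul_assoc]⟩
  · exact ⟨0, 0, 5, by
      simp only [rep, gen, zpow_zero, one_mul, mul_one]
      simp only [← mul_assoc]
      exact Bac.symm⟩
  · exact ⟨0, 0, 3, by
      simp only [rep, gen, zpow_zero, one_mul, mul_one]
      simp only [mul_assoc]
      simp only [mul_assoc, sq1 haa, sq1 hbb, sq1 hcc, haa, hbb, hcc, one_mul, mul_one]⟩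
  · exact ⟨-1, -1, 0, by simp [rep, gen, zpow_neg, zpow_one, ← B6, mul_assoc]⟩
  · exact ⟨0, 0, 4, by
      simp only [rep, gen, zpow_zero, one_mul, mul_one]
      simp only [mul_assoc]
      rw [Aac gc]
      simp only [mul_assoc, sq1 haa, sq1 hbb, sq1 hcc, haa, hbb, hcc, one_mul, mul_one]⟩


lemma step (m n : ℤ) (w : Fin 6) (s : Fin 3) :
    ∃ (m' n' : ℤ) (w' : Fin 6), tt ^ m * uu ^ n * rep w * gen s = tt ^ m' * uu ^ n' * rep w' := by
  obtain ⟨p, q, w', hk⟩ := key w s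
  refine ⟨m + p, n + q, w', ?_⟩
  have hco : uu ^ n * tt ^ p = tt ^ p * uu ^ n :=
    ((show Commute uu tt from htu.symm).zpow_zpow n p).eq
  calc tt ^ m * uu ^ n * rep w * gen s
      = tt ^ m * (uu ^ n * (rep w * gen s)) := by simp only [mul_assoc]
    _ = tt ^ m * (uu ^ n * (tt ^ p * (uu ^ q * rep w'))) := by
        rw [mul_assoc] at hk; rw [hk]
    _ = tt ^ m * ((uu ^ n * tt ^ p) * (uu ^ q * rep w')) := by simp only [mul_assoc]
    _ = tt ^ m * ((tt ^ p * uu ^ n) * (uu ^ q * rep w')) := by rw [hco]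
    _ = (tt ^ m * tt ^ p) * ((uu ^ n * uu ^ q) * rep w') := by simp only [mul_assoc]
    _ = tt ^ (m + p) * uu ^ (n + q) * rep w' := by
        rw [← zpow_add, ← zpow_add, mul_assoc]

lemma gen_of (i : Fin 3) : PresentedGroup.mk myRels (FreeGroup.of i) = gen i := by
  fin_cases i <;> rfl

lemma gen_inv (i : Fin 3) : (gen i)⁻¹ = gen i := by
  fin_cases i
  · exact inva
  · exact invb
  · exact invc

lemma all_mem (g : G2) : ∃ (m n : ℤ) (w : Fin 6), g = tt ^ m * uu ^ n * rep w := by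
  have main : ∀ (g : G2) (m n : ℤ) (w : Fin 6),
      ∃ (m' n' : ℤ) (w' : Fin 6), tt ^ m * uu ^ n * rep w * g = tt ^ m' * uu ^ n' * rep w' := by
    intro g
    induction g using PresentedGroup.induction_on with
    | H z =>
      induction z using FreeGroup.induction_on with
      | C1 => intro m n w; exact ⟨m, n, w, by rw [map_one, mul_one]⟩
      | of i =>
        intro m n w
        rw [gen_of]
        exact step m n w i
      | inv_of i ih =>
        intro m n w
        rw [map_inv, gen_of, gen_inv]
        exact step m n w i
      | mul z1 z2 ih1 ih2 =>
        intro m n w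
        rw [map_mul, ← mul_assoc]
        obtain ⟨m1, n1, w1, h1⟩ := ih1 m n w
        rw [h1]
        exact ih2 m1 n1 w1
  obtain ⟨m, n, w, h⟩ := main g 0 0 0
  refine ⟨m, n, w, ?_⟩
  rw [show rep 0 = 1 from rfl] at h
  simp only [zpow_zero, one_mul, mul_one] at h
  exact h


lemma hsa : sigma ga = EA := PresentedGroup.toGroup.of fgen_rels
lemma hsb : sigma gb = EB := PresentedGroup.toGroup.of fgen_rels
lemma hsc : sigma gc = EC := PresentedGroup.toGroup.of fgen_rels

@[simp] lemma constVAdd_apply' (v p : ℝ × ℝ) :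
    (AffineEquiv.constVAdd ℝ (ℝ × ℝ) v) p = v + p := rfl

lemma sig_t : sigma tt = AffineEquiv.constVAdd ℝ (ℝ × ℝ) ((3:ℝ), (0:ℝ)) := by
  apply AffineEquiv.ext
  intro p
  rw [tt]
  simp [map_mul, hsa, hsb, hsc, Prod.ext_iff] <;> (try constructor) <;> ring

lemma sig_u : sigma uu = AffineEquiv.constVAdd ℝ (ℝ × ℝ) ((0:ℝ), (3:ℝ)) := by
  apply AffineEquiv.ext
  intro p
  rw [uu]
  simp [map_mul, hsa, hsb, hsc, Prod.ext_iff] <;> (try constructor) <;> ring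

lemma zpow_constVAdd (v : ℝ × ℝ) (m : ℤ) (p : ℝ × ℝ) :
    ((AffineEquiv.constVAdd ℝ (ℝ × ℝ) v) ^ m) p = m • v + p := by
  rw [← AffineEquiv.constVAdd_zsmul]
  rfl


@[simp] lemma rep_0 : rep 0 = 1 := rfl
@[simp] lemma rep_1 : rep 1 = ga := rfl
@[simp] lemma rep_2 : rep 2 = gc := rfl
@[simp] lemma rep_3 : rep 3 = ga * gc := rfl
@[simp] lemma rep_4 : rep 4 = gc * ga := rfl
@[simp] lemma rep_5 : rep 5 = ga * (gc * ga) := rfl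
@[simp] lemma rep_0' : rep ⟨0, by omega⟩ = 1 := rfl
@[simp] lemma rep_1' : rep ⟨1, by omega⟩ = ga := rfl
@[simp] lemma rep_2' : rep ⟨2, by omega⟩ = gc := rfl
@[simp] lemma rep_3' : rep ⟨3, by omega⟩ = ga * gc := rfl
@[simp] lemma rep_4' : rep ⟨4, by omega⟩ = gc * ga := rfl
@[simp] lemma rep_5' : rep ⟨5, by omega⟩ = ga * (gc * ga) := rfl

lemma ker_triv : ∀ g : G2, sigma g = 1 → g = 1 := by
  intro g hg
  obtain ⟨m, n, w, rfl⟩ := all_mem g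
  rw [map_mul, map_mul, map_zpow, map_zpow, sig_t, sig_u] at hg
  have h0 := DFunLike.congr_fun hg ((0:ℝ), (0:ℝ))
  have h1 := DFunLike.congr_fun hg ((1:ℝ), (0:ℝ))
  fin_cases w <;>
    simp only [rep_0, rep_1, rep_2, rep_3, rep_4, rep_5, rep_0', rep_1', rep_2', rep_3', rep_4', rep_5', map_mul, map_one, hsa, hsb, hsc,
      ae_mul_apply, ae_one_apply, EA_apply, EB_apply, EC_apply, zpow_constVAdd,
      Prod.smul_mk, zsmul_eq_mul, Prod.ext_iff, Prod.mk_add_mk, Prod.fst, Prod.snd] at h0 h1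
  · -- w = 0
    norm_num at h0
    have hm : m = 0 := by
      have : (m : ℝ) = 0 := by linarith [h0.1]
      exact_mod_cast this
    have hn : n = 0 := by
      have : (n : ℝ) = 0 := by linarith [h0.2]
      exact_mod_cast this
    subst hm; subst hn
    simp
  all_goals exfalso
  all_goals norm_num at h0 h1
  all_goals (obtain ⟨rfl, rfl⟩ := h0; norm_num at h1)

end Stmt3Aux


/-- Let `G₂ = ⟨a, b, c | a² = b² = c² = (ab)³ = (bc)³ = (ac)³ = 1⟩`.
The homomorphism `σ₂` from `G₂` to the group of affine equivalences of `ℝ²`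
determined by `σ₂(a)(x,y) = (x, x − y)`, `σ₂(b)(x,y) = (3 − y, 3 − x)`,
`σ₂(c)(x,y) = (−x + y, y)` is well defined (the images satisfy the relators)
and injective. -/
theorem stmt_3 :
    ∃ σ : PresentedGroup
        ({FreeGroup.of 0 ^ 2, FreeGroup.of 1 ^ 2, FreeGroup.of 2 ^ 2,
          (FreeGroup.of 0 * FreeGroup.of 1) ^ 3,
          (FreeGroup.of 1 * FreeGroup.of 2) ^ 3,
          (FreeGroup.of 0 * FreeGroup.of 2) ^ 3} :
          Set (FreeGroup (Fin 3))) →* ((ℝ × ℝ) ≃ᵃ[ℝ] (ℝ × ℝ)),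
      (∀ p : ℝ × ℝ, σ (PresentedGroup.of 0) p = (p.1, p.1 - p.2)) ∧
      (∀ p : ℝ × ℝ, σ (PresentedGroup.of 1) p = (3 - p.2, 3 - p.1)) ∧
      (∀ p : ℝ × ℝ, σ (PresentedGroup.of 2) p = (-p.1 + p.2, p.2)) ∧
      Function.Injective σ := by
  refine ⟨sigma, ?_, ?_, ?_, ?_⟩
  · intro p; rw [show (PresentedGroup.of 0 : G2) = ga from rfl, hsa]; simp
  · intro p; rw [show (PresentedGroup.of 1 : G2) = gb from rfl, hsb]; simp
  · intro p; rw [show (PresentedGroup.of 2 : G2) = gc from rfl, hsc]; simp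
  · exact (injective_iff_map_eq_one sigma).mpr ker_triv
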